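/- Let k ≥ 2 and let d = {a, b} be a diagonal of the 2k-gon such that exactly one of a, b has its canonical representative in {0, 1, …, k−1}, and such that σ(d) ≠ d. Then d crosses σ(d). -/

import Mathlib

/-- `e` is a diagonal of the `m`-gon with vertex set `ZMod m`:
a 2-element set `{a, b}` with `b ∉ {a, a + 1, a - 1}`. -/
def IsDiag (m : ℕ) (e : Finset (ZMod m)) : Prop :=
  ∃ a b : ZMod m, e = {a, b} ∧ b ≠ a ∧ b ≠ a + 1 ∧ b ≠ a - 1

/-- `x` lies in the open cyclic arc `{a+1, a+2, …, b-1}` from `a` to `b`. -/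
def InArc (m : ℕ) (a b x : ZMod m) : Prop :=
  0 < (x - a).val ∧ (x - a).val < (b - a).val

/-- The diagonals `{a,b}` and `{c,d}` cross: the four points are pairwise
distinct and exactly one of `c, d` lies in the open arc from `a` to `b`. -/
def CrossPts (m : ℕ) (a b c d : ZMod m) : Prop :=
  ([a, b, c, d] : List (ZMod m)).Pairwise (· ≠ ·) ∧
    Xor' (InArc m a b c) (InArc m a b d)

/-- Crossing of diagonals, as unordered pairs. -/
def Cross (m : ℕ) (e f : Finset (ZMod m)) : Prop :=
  ∃ a b c d : ZMod m, e = {a, b} ∧ f = {c, d} ∧ CrossPts m a b c d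

/-- `A` is a set of pairwise non-crossing diagonals of the `m`-gon. -/
def NonCrossingSet (m : ℕ) (A : Set (Finset (ZMod m))) : Prop :=
  (∀ e ∈ A, IsDiag m e) ∧ ∀ e ∈ A, ∀ f ∈ A, ¬ Cross m e f

/-- The reflection `σ(i) = -1 - i` of the `2k`-gon. -/
def sigmaRefl (k : ℕ) (i : ZMod (2 * k)) : ZMod (2 * k) := -1 - i

/-- A set of diagonals of the `2k`-gon is `σ`-invariant if it is closed under
the induced action `σ{a,b} = {σ a, σ b}`. -/
def SigmaInv (k : ℕ) (A : Set (Finset (ZMod (2 * k)))) : Prop :=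
  ∀ e ∈ A, e.image (sigmaRefl k) ∈ A


lemma val_sub_cases {n : ℕ} [NeZero n] (x y : ZMod n) :
    (x - y).val = if y.val ≤ x.val then x.val - y.val else x.val + n - y.val := by
  have hx := ZMod.val_lt x; have hy := ZMod.val_lt y
  have h1 : (x - y : ZMod n) = ((x.val + (n - y.val) : ℕ) : ZMod n) := by
    push_cast [Nat.cast_sub hy.le]
    simp [ZMod.natCast_val, ZMod.cast_id]
    ring
  rw [h1, ZMod.val_natCast]
  split_ifs with h
  · have h2 : x.val + (n - y.val) = n + (x.val - y.val) := by omega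
    rw [h2, Nat.add_mod_left, Nat.mod_eq_of_lt (by omega)]
  · rw [Nat.mod_eq_of_lt (by omega)]; omega

lemma neg_one_val {n : ℕ} (hn : 1 < n) : (-1 : ZMod n).val = n - 1 := by
  haveI : NeZero n := ⟨by omega⟩
  have : (-1 : ZMod n) = ((n - 1 : ℕ) : ZMod n) := by
    push_cast [Nat.cast_sub (by omega : 1 ≤ n)]
    simp
  rw [this, ZMod.val_natCast, Nat.mod_eq_of_lt (by omega)]

lemma key_crosspts (k : ℕ) (hk : 2 ≤ k) (a b : ZMod (2 * k))
    (ha : a.val < k) (hb : ¬ b.val < k) (hsum : a.val + b.val ≠ 2 * k - 1) :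
    CrossPts (2 * k) a b (-1 - a) (-1 - b) := by
  haveI : NeZero (2 * k) := ⟨by omega⟩
  have hva := ZMod.val_lt a; have hvb := ZMod.val_lt b
  have hone : (-1 : ZMod (2 * k)).val = 2 * k - 1 := neg_one_val (by omega)
  have hsa : (-1 - a : ZMod (2 * k)).val = 2 * k - 1 - a.val := by
    rw [val_sub_cases, hone]; split_ifs with h <;> omega
  have hsb : (-1 - b : ZMod (2 * k)).val = 2 * k - 1 - b.val := by
    rw [val_sub_cases, hone]; split_ifs with h <;> omega
  have hval : ∀ x y : ZMod (2 * k), x.val ≠ y.val → x ≠ y :=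
    fun x y h hxy => h (by rw [hxy])
  constructor
  · have h1 : a ≠ b := hval _ _ (by omega)
    have h2 : a ≠ -1 - a := hval _ _ (by omega)
    have h3 : a ≠ -1 - b := hval _ _ (by omega)
    have h4 : b ≠ -1 - a := hval _ _ (by omega)
    have h5 : b ≠ -1 - b := hval _ _ (by omega)
    have h6 : (-1 - a : ZMod (2 * k)) ≠ -1 - b := hval _ _ (by omega)
    simp [List.pairwise_cons, h1, h2, h3, h4, h5, h6]
  · simp only [Xor', Xor, InArc, val_sub_cases, hsa, hsb]
    split_ifs <;> omega

/-- A diagonal `d = {a, b}` of the `2k`-gon which crosses the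
symmetry axis (exactly one of `a, b` has canonical representative in
`{0, …, k-1}`) and is not fixed by `σ` crosses its mirror image `σ(d)`. -/
theorem axis_crossing_diagonal_crosses_its_mirror (k : ℕ) (hk : 2 ≤ k)
    (a b : ZMod (2 * k)) (hd : IsDiag (2 * k) {a, b})
    (haxis : Xor' (a.val < k) (b.val < k))
    (hns : ({a, b} : Finset (ZMod (2 * k))).image (sigmaRefl k) ≠ {a, b}) :
    Cross (2 * k) {a, b} (({a, b} : Finset (ZMod (2 * k))).image (sigmaRefl k)) := by
  haveI : NeZero (2 * k) := ⟨by omega⟩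
  have hva := ZMod.val_lt a; have hvb := ZMod.val_lt b
  have hone : (-1 : ZMod (2 * k)).val = 2 * k - 1 := neg_one_val (by omega)
  have hsa : (-1 - a : ZMod (2 * k)).val = 2 * k - 1 - a.val := by
    rw [val_sub_cases, hone]; split_ifs with h <;> omega
  have hsb : (-1 - b : ZMod (2 * k)).val = 2 * k - 1 - b.val := by
    rw [val_sub_cases, hone]; split_ifs with h <;> omega
  have himg : ({a, b} : Finset (ZMod (2 * k))).image (sigmaRefl k) = {-1 - a, -1 - b} := by
    simp [sigmaRefl]
  have hsum : a.val + b.val ≠ 2 * k - 1 := by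
    intro h
    apply hns
    have hb2 : b = -1 - a := ZMod.val_injective _ (by omega)
    have ha2 : a = -1 - b := by rw [hb2]; ring
    rw [himg, ← hb2, ← ha2, Finset.pair_comm]
  rcases haxis with ⟨ha, hb⟩ | ⟨hb, ha⟩
  · exact ⟨a, b, -1 - a, -1 - b, rfl, himg, key_crosspts k hk a b ha hb hsum⟩
  · exact ⟨b, a, -1 - b, -1 - a, Finset.pair_comm a b, by rw [himg, Finset.pair_comm],
      key_crosspts k hk b a hb ha (by omega)⟩
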